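/- Let A, B, C be nonempty finite types and let K_AB, K_BC, K_AC be Hermitian cost matrices indexed by (A×B)×(A×B), (B×C)×(B×C), (A×C)×(A×C) respectively. Let Q₃ be the set of three-time states over time, i.e. all matrices (ρ ⊗ₖ 1_{B×C}) ★ ( (J_AB ⊗ₖ 1_C) ★ (1_A ⊗ₖ J_BC) ) indexed by A×B×C, where ρ ranges over states on A, J_AB over Jamiołkowski matrices from A to B, and J_BC over Jamiołkowski matrices from B to C (the placements ⊗ₖ 1 refer to the obvious index identifications of A×B×C). Define K' = K_AB ⊗ 1_C + 1_A ⊗ K_BC − K_AC ⊗ 1_B, where K_AC ⊗ 1_B denotes the matrix on A×B×C acting as K_AC on the A and C factors and as the identity on B. If Re Tr(K'·Q) ≥ 0 for all Q ∈ Q₃, then for all states ρ on A, σ on B and τ on C: 𝒦_{K_AC}(ρ, τ) ≤ 𝒦_{K_AB}(ρ, σ) + 𝒦_{K_BC}(σ, τ). -/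

import Mathlib

open Matrix
open scoped Kronecker ComplexOrder

noncomputable def jordan {n : Type*} [Fintype n] (X Y : Matrix n n ℂ) : Matrix n n ℂ :=
  (2 : ℂ)⁻¹ • (X * Y + Y * X)

noncomputable def trB {A B : Type*} [Fintype B] (M : Matrix (A × B) (A × B) ℂ) : Matrix A A ℂ :=
  Matrix.of fun i j => ∑ k, M (i, k) (j, k)

noncomputable def trA {A B : Type*} [Fintype A] (M : Matrix (A × B) (A × B) ℂ) : Matrix B B ℂ :=
  Matrix.of fun k l => ∑ i, M (i, k) (i, l)

def ptA {A B : Type*} (M : Matrix (A × B) (A × B) ℂ) : Matrix (A × B) (A × B) ℂ :=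
  Matrix.of fun p q => M (q.1, p.2) (p.1, q.2)

def swap (A : Type*) [DecidableEq A] : Matrix (A × A) (A × A) ℂ :=
  Matrix.of fun p q => if p.1 = q.2 ∧ p.2 = q.1 then 1 else 0

def IsState {A : Type*} [Fintype A] (ρ : Matrix A A ℂ) : Prop :=
  ρ.PosSemidef ∧ ρ.trace = 1

def IsJam {A B : Type*} [Fintype A] [Fintype B] [DecidableEq A]
    (J : Matrix (A × B) (A × B) ℂ) : Prop :=
  (ptA J).PosSemidef ∧ trB J = 1

noncomputable def cost {A B : Type*} [Fintype A] [Fintype B] [DecidableEq A] [DecidableEq B]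
    (K : Matrix (A × B) (A × B) ℂ) (ρ : Matrix A A ℂ) (σ : Matrix B B ℂ) : ℝ :=
  sInf { r : ℝ | ∃ J : Matrix (A × B) (A × B) ℂ, IsJam J ∧
      trA ((ρ ⊗ₖ (1 : Matrix B B ℂ)) * J) = σ ∧
      r = (Matrix.trace (K * jordan (ρ ⊗ₖ (1 : Matrix B B ℂ)) J)).re }

/-- Embedding of a matrix on `A × B` into `A × (B × C)`, acting as the identity on `C`. -/
def embAB {A B C : Type*} [DecidableEq C] (M : Matrix (A × B) (A × B) ℂ) :
    Matrix (A × B × C) (A × B × C) ℂ :=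
  Matrix.of fun p q => M (p.1, p.2.1) (q.1, q.2.1) * (if p.2.2 = q.2.2 then 1 else 0)

/-- Embedding of a matrix on `A × C` into `A × (B × C)`, acting as the identity on `B`. -/
def embAC {A B C : Type*} [DecidableEq B] (M : Matrix (A × C) (A × C) ℂ) :
    Matrix (A × B × C) (A × B × C) ℂ :=
  Matrix.of fun p q => M (p.1, p.2.2) (q.1, q.2.2) * (if p.2.1 = q.2.1 then 1 else 0)

set_option linter.unusedSectionVars false

section QOTAux
variable {A B C : Type*} [Fintype A] [Fintype B] [Fintype C]
  [DecidableEq A] [DecidableEq B] [DecidableEq C]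

noncomputable def trBmid (M : Matrix (A × B × C) (A × B × C) ℂ) : Matrix (A × C) (A × C) ℂ :=
  Matrix.of fun p q => ∑ k, M (p.1, k, p.2) (q.1, k, q.2)
noncomputable def trCend (M : Matrix (A × B × C) (A × B × C) ℂ) : Matrix (A × B) (A × B) ℂ :=
  Matrix.of fun p q => ∑ m, M (p.1, p.2, m) (q.1, q.2, m)
noncomputable def trA3 (M : Matrix (A × B × C) (A × B × C) ℂ) : Matrix (B × C) (B × C) ℂ :=
  Matrix.of fun p q => ∑ i, M (i, p.1, p.2) (i, q.1, q.2)
noncomputable def qcomp (J1 : Matrix (A × B) (A × B) ℂ) (J2 : Matrix (B × C) (B × C) ℂ) :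
    Matrix (A × C) (A × C) ℂ :=
  Matrix.of fun p q => ∑ k, ∑ l, J1 (p.1, k) (q.1, l) * J2 (l, p.2) (k, q.2)

lemma sum_sum_ite_eq {α β γ : Type*} [Fintype α] [Fintype β] [DecidableEq α] [AddCommMonoid γ]
    (y : α) (f : α → β → γ) :
    (∑ x : α, ∑ z : β, if y = x then f x z else 0) = ∑ z : β, f y z := by
  rw [Finset.sum_comm]; simp

lemma sum3_ite_eq {α β γ δ : Type*} [Fintype α] [Fintype β] [Fintype γ] [DecidableEq α]
    [AddCommMonoid δ] (y : α) (f : α → β → γ → δ) :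
    (∑ x : α, ∑ z : β, ∑ w : γ, if y = x then f x z w else 0) = ∑ z : β, ∑ w : γ, f y z w := by
  rw [Finset.sum_comm]
  refine Finset.sum_congr rfl fun z _ => ?_
  rw [Finset.sum_comm]
  simp

lemma sum_sum_ite_eq' {α β γ : Type*} [Fintype α] [Fintype β] [DecidableEq α] [AddCommMonoid γ]
    (y : α) (f : α → β → γ) :
    (∑ x : α, ∑ z : β, if x = y then f x z else 0) = ∑ z : β, f y z := by
  rw [Finset.sum_comm]; simp

lemma sum3_ite_eq' {α β γ δ : Type*} [Fintype α] [Fintype β] [Fintype γ] [DecidableEq α]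
    [AddCommMonoid δ] (y : α) (f : α → β → γ → δ) :
    (∑ x : α, ∑ z : β, ∑ w : γ, if x = y then f x z w else 0) = ∑ z : β, ∑ w : γ, f y z w := by
  rw [Finset.sum_comm]
  refine Finset.sum_congr rfl fun z _ => ?_
  rw [Finset.sum_comm]
  simp

lemma sum_rot3 {α β γ M : Type*} [Fintype α] [Fintype β] [Fintype γ] [AddCommMonoid M]
    (f : α → β → γ → M) :
    ∑ x : α, ∑ y : β, ∑ z : γ, f x y z = ∑ z : γ, ∑ x : α, ∑ y : β, f x y z := by
  trans ∑ x : α, ∑ z : γ, ∑ y : β, f x y z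
  · exact Finset.sum_congr rfl fun x _ => Finset.sum_comm
  · exact Finset.sum_comm

lemma trace_mul_pair {n : Type*} [Fintype n] (X Y : Matrix n n ℂ) :
    (X * Y).trace = ∑ p, ∑ q, X p q * Y q p := by
  simp [Matrix.trace, Matrix.diag, Matrix.mul_apply]

lemma trace_embAC_mul (K : Matrix (A × C) (A × C) ℂ) (Q : Matrix (A × B × C) (A × B × C) ℂ) :
    (embAC (B := B) K * Q).trace = (K * trBmid Q).trace := by
  rw [trace_mul_pair, trace_mul_pair]
  simp only [embAC, trBmid, Matrix.of_apply, Fintype.sum_prod_type, mul_ite, mul_one, mul_zero,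
    ite_mul, zero_mul, Finset.sum_ite_eq, Finset.sum_ite_eq', Finset.mem_univ, if_true,
    Finset.mul_sum, Finset.sum_mul, sum_sum_ite_eq]
  refine Finset.sum_congr rfl fun x _ => ?_
  rw [Finset.sum_comm]
  refine Finset.sum_congr rfl fun c _ => ?_
  rw [Finset.sum_comm]
  refine Finset.sum_congr rfl fun a2 _ => ?_
  rw [Finset.sum_comm]

lemma trace_embAB_mul (K : Matrix (A × B) (A × B) ℂ) (Q : Matrix (A × B × C) (A × B × C) ℂ) :
    (embAB (C := C) K * Q).trace = (K * trCend Q).trace := by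
  rw [trace_mul_pair, trace_mul_pair]
  simp only [embAB, trCend, Matrix.of_apply, Fintype.sum_prod_type, mul_ite, mul_one, mul_zero,
    ite_mul, zero_mul, Finset.sum_ite_eq, Finset.sum_ite_eq', Finset.mem_univ, if_true,
    Finset.mul_sum, Finset.sum_mul, sum_sum_ite_eq]
  refine Finset.sum_congr rfl fun x _ => ?_
  refine Finset.sum_congr rfl fun x1 _ => ?_
  rw [Finset.sum_comm]
  refine Finset.sum_congr rfl fun a2 _ => ?_
  rw [Finset.sum_comm]

lemma trace_oneKron_mul (K : Matrix (B × C) (B × C) ℂ) (Q : Matrix (A × B × C) (A × B × C) ℂ) :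
    (((1 : Matrix A A ℂ) ⊗ₖ K) * Q).trace = (K * trA3 Q).trace := by
  rw [trace_mul_pair, trace_mul_pair]
  simp only [Matrix.kroneckerMap_apply, Matrix.one_apply, trA3, Matrix.of_apply,
    Fintype.sum_prod_type, mul_ite, mul_one, mul_zero, ite_mul, zero_mul, one_mul,
    Finset.sum_ite_eq, Finset.sum_ite_eq', Finset.mem_univ, if_true,
    Finset.mul_sum, Finset.sum_mul, sum_sum_ite_eq, sum3_ite_eq]
  rw [Finset.sum_comm]
  refine Finset.sum_congr rfl fun x1 _ => ?_
  rw [Finset.sum_comm]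
  refine Finset.sum_congr rfl fun x2 _ => ?_
  rw [Finset.sum_comm]
  refine Finset.sum_congr rfl fun x3 _ => ?_
  rw [Finset.sum_comm]

lemma trBmid_add (X Y : Matrix (A × B × C) (A × B × C) ℂ) :
    trBmid (X + Y) = trBmid X + trBmid Y := by
  ext p q; simp [trBmid, Finset.sum_add_distrib]

lemma trBmid_smul (c : ℂ) (X : Matrix (A × B × C) (A × B × C) ℂ) :
    trBmid (c • X) = c • trBmid X := by
  ext p q; simp [trBmid, Finset.mul_sum]

lemma trBmid_rho_mul (ρ : Matrix A A ℂ) (X : Matrix (A × B × C) (A × B × C) ℂ) :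
    trBmid ((ρ ⊗ₖ (1 : Matrix (B × C) (B × C) ℂ)) * X)
      = (ρ ⊗ₖ (1 : Matrix C C ℂ)) * trBmid X := by
  ext ⟨i, m⟩ ⟨j, n⟩
  simp only [trBmid, Matrix.of_apply, Matrix.mul_apply, Matrix.kroneckerMap_apply,
    Matrix.one_apply, Fintype.sum_prod_type, Prod.mk.injEq, ite_and, mul_ite, mul_one, mul_zero,
    ite_mul, zero_mul, Finset.sum_ite_eq, Finset.sum_ite_eq', Finset.mem_univ, if_true,
    Finset.mul_sum, Finset.sum_mul]
  try simp only [sum_sum_ite_eq, sum3_ite_eq, sum_sum_ite_eq', sum3_ite_eq', mul_ite, mul_one, mul_zero, ite_mul, zero_mul, one_mul, Finset.sum_ite_eq, Finset.sum_ite_eq', Finset.mem_univ, if_true]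
  rw [Finset.sum_comm]

lemma trBmid_mul_rho (ρ : Matrix A A ℂ) (X : Matrix (A × B × C) (A × B × C) ℂ) :
    trBmid (X * (ρ ⊗ₖ (1 : Matrix (B × C) (B × C) ℂ)))
      = trBmid X * (ρ ⊗ₖ (1 : Matrix C C ℂ)) := by
  ext ⟨i, m⟩ ⟨j, n⟩
  simp only [trBmid, Matrix.of_apply, Matrix.mul_apply, Matrix.kroneckerMap_apply,
    Matrix.one_apply, Fintype.sum_prod_type, Prod.mk.injEq, ite_and, mul_ite, mul_one, mul_zero,
    ite_mul, zero_mul, Finset.sum_ite_eq, Finset.sum_ite_eq', Finset.mem_univ, if_true,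
    Finset.mul_sum, Finset.sum_mul]
  try simp only [sum_sum_ite_eq, sum3_ite_eq, sum_sum_ite_eq', sum3_ite_eq', mul_ite, mul_one, mul_zero, ite_mul, zero_mul, one_mul, Finset.sum_ite_eq, Finset.sum_ite_eq', Finset.mem_univ, if_true]
  rw [Finset.sum_comm]

lemma trCend_add (X Y : Matrix (A × B × C) (A × B × C) ℂ) :
    trCend (X + Y) = trCend X + trCend Y := by
  ext p q; simp [trCend, Finset.sum_add_distrib]

lemma trCend_smul (c : ℂ) (X : Matrix (A × B × C) (A × B × C) ℂ) :
    trCend (c • X) = c • trCend X := by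
  ext p q; simp [trCend, Finset.mul_sum]

lemma trCend_rho_mul (ρ : Matrix A A ℂ) (X : Matrix (A × B × C) (A × B × C) ℂ) :
    trCend ((ρ ⊗ₖ (1 : Matrix (B × C) (B × C) ℂ)) * X)
      = (ρ ⊗ₖ (1 : Matrix B B ℂ)) * trCend X := by
  ext ⟨i, k⟩ ⟨j, l⟩
  simp only [trCend, Matrix.of_apply, Matrix.mul_apply, Matrix.kroneckerMap_apply,
    Matrix.one_apply, Fintype.sum_prod_type, Prod.mk.injEq, ite_and, mul_ite, mul_one, mul_zero,
    ite_mul, zero_mul, Finset.sum_ite_eq, Finset.sum_ite_eq', Finset.mem_univ, if_true,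
    Finset.mul_sum, Finset.sum_mul]
  try simp only [sum_sum_ite_eq, sum3_ite_eq, sum_sum_ite_eq', sum3_ite_eq', mul_ite, mul_one, mul_zero, ite_mul, zero_mul, one_mul, Finset.sum_ite_eq, Finset.sum_ite_eq', Finset.mem_univ, if_true]
  rw [Finset.sum_comm]

lemma trCend_mul_rho (ρ : Matrix A A ℂ) (X : Matrix (A × B × C) (A × B × C) ℂ) :
    trCend (X * (ρ ⊗ₖ (1 : Matrix (B × C) (B × C) ℂ)))
      = trCend X * (ρ ⊗ₖ (1 : Matrix B B ℂ)) := by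
  ext ⟨i, k⟩ ⟨j, l⟩
  simp only [trCend, Matrix.of_apply, Matrix.mul_apply, Matrix.kroneckerMap_apply,
    Matrix.one_apply, Fintype.sum_prod_type, Prod.mk.injEq, ite_and, mul_ite, mul_one, mul_zero,
    ite_mul, zero_mul, Finset.sum_ite_eq, Finset.sum_ite_eq', Finset.mem_univ, if_true,
    Finset.mul_sum, Finset.sum_mul]
  try simp only [sum_sum_ite_eq, sum3_ite_eq, sum_sum_ite_eq', sum3_ite_eq', mul_ite, mul_one, mul_zero, ite_mul, zero_mul, one_mul, Finset.sum_ite_eq, Finset.sum_ite_eq', Finset.mem_univ, if_true]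
  rw [Finset.sum_comm]

lemma trBmid_jordan (ρ : Matrix A A ℂ) (X : Matrix (A × B × C) (A × B × C) ℂ) :
    trBmid (jordan (ρ ⊗ₖ (1 : Matrix (B × C) (B × C) ℂ)) X)
      = jordan (ρ ⊗ₖ (1 : Matrix C C ℂ)) (trBmid X) := by
  unfold jordan
  rw [trBmid_smul, trBmid_add, trBmid_rho_mul, trBmid_mul_rho]

lemma trCend_jordan (ρ : Matrix A A ℂ) (X : Matrix (A × B × C) (A × B × C) ℂ) :
    trCend (jordan (ρ ⊗ₖ (1 : Matrix (B × C) (B × C) ℂ)) X)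
      = jordan (ρ ⊗ₖ (1 : Matrix B B ℂ)) (trCend X) := by
  unfold jordan
  rw [trCend_smul, trCend_add, trCend_rho_mul, trCend_mul_rho]

lemma trA3_add (X Y : Matrix (A × B × C) (A × B × C) ℂ) :
    trA3 (X + Y) = trA3 X + trA3 Y := by
  ext p q; simp [trA3, Finset.sum_add_distrib]

lemma trA3_smul (c : ℂ) (X : Matrix (A × B × C) (A × B × C) ℂ) :
    trA3 (c • X) = c • trA3 X := by
  ext p q; simp [trA3, Finset.mul_sum]

lemma mulE1 (J1 : Matrix (A × B) (A × B) ℂ) (J2 : Matrix (B × C) (B × C) ℂ)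
    (i : A) (k : B) (m : C) (j : A) (l : B) (n : C) :
    (embAB (C := C) J1 * ((1 : Matrix A A ℂ) ⊗ₖ J2)) (i, k, m) (j, l, n)
      = ∑ l', J1 (i, k) (j, l') * J2 (l', m) (l, n) := by
  simp only [Matrix.mul_apply, embAB, Matrix.kroneckerMap_apply, Matrix.one_apply,
    Matrix.of_apply, Fintype.sum_prod_type, Prod.mk.injEq, ite_and, mul_ite, mul_one, mul_zero,
    ite_mul, zero_mul, one_mul, Finset.sum_ite_eq, Finset.sum_ite_eq', Finset.mem_univ, if_true]
  try simp only [sum_sum_ite_eq, sum3_ite_eq, sum_sum_ite_eq', sum3_ite_eq', mul_ite, mul_one, mul_zero, ite_mul, zero_mul, one_mul, Finset.sum_ite_eq, Finset.sum_ite_eq', Finset.mem_univ, if_true]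

lemma mulE2 (J1 : Matrix (A × B) (A × B) ℂ) (J2 : Matrix (B × C) (B × C) ℂ)
    (i : A) (k : B) (m : C) (j : A) (l : B) (n : C) :
    (((1 : Matrix A A ℂ) ⊗ₖ J2) * embAB (C := C) J1) (i, k, m) (j, l, n)
      = ∑ l', J2 (k, m) (l', n) * J1 (i, l') (j, l) := by
  simp only [Matrix.mul_apply, embAB, Matrix.kroneckerMap_apply, Matrix.one_apply,
    Matrix.of_apply, Fintype.sum_prod_type, Prod.mk.injEq, ite_and, mul_ite, mul_one, mul_zero,
    ite_mul, zero_mul, one_mul, Finset.sum_ite_eq, Finset.sum_ite_eq', Finset.mem_univ, if_true]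
  try simp only [sum_sum_ite_eq, sum3_ite_eq, sum_sum_ite_eq', sum3_ite_eq', mul_ite, mul_one, mul_zero, ite_mul, zero_mul, one_mul, Finset.sum_ite_eq, Finset.sum_ite_eq', Finset.mem_univ, if_true]

lemma mulRhoL (ρ : Matrix A A ℂ) (X : Matrix (A × B × C) (A × B × C) ℂ)
    (i : A) (k : B) (m : C) (q : A × B × C) :
    ((ρ ⊗ₖ (1 : Matrix (B × C) (B × C) ℂ)) * X) (i, k, m) q
      = ∑ i', ρ i i' * X (i', k, m) q := by
  simp only [Matrix.mul_apply, Matrix.kroneckerMap_apply, Matrix.one_apply,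
    Fintype.sum_prod_type, Prod.mk.injEq, ite_and, mul_ite, mul_one, mul_zero,
    ite_mul, zero_mul, one_mul, Finset.sum_ite_eq, Finset.sum_ite_eq', Finset.mem_univ, if_true]
  try simp only [sum_sum_ite_eq, sum3_ite_eq, sum_sum_ite_eq', sum3_ite_eq', mul_ite, mul_one, mul_zero, ite_mul, zero_mul, one_mul, Finset.sum_ite_eq, Finset.sum_ite_eq', Finset.mem_univ, if_true]

lemma mulRhoR (ρ : Matrix A A ℂ) (X : Matrix (A × B × C) (A × B × C) ℂ)
    (p : A × B × C) (j : A) (l : B) (n : C) :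
    (X * (ρ ⊗ₖ (1 : Matrix (B × C) (B × C) ℂ))) p (j, l, n)
      = ∑ j', X p (j', l, n) * ρ j' j := by
  simp only [Matrix.mul_apply, Matrix.kroneckerMap_apply, Matrix.one_apply,
    Fintype.sum_prod_type, Prod.mk.injEq, ite_and, mul_ite, mul_one, mul_zero,
    ite_mul, zero_mul, one_mul, Finset.sum_ite_eq, Finset.sum_ite_eq', Finset.mem_univ, if_true]
  try simp only [sum_sum_ite_eq, sum3_ite_eq, sum_sum_ite_eq', sum3_ite_eq', mul_ite, mul_one, mul_zero, ite_mul, zero_mul, one_mul, Finset.sum_ite_eq, Finset.sum_ite_eq', Finset.mem_univ, if_true]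

lemma trBmid_core (J1 : Matrix (A × B) (A × B) ℂ) (J2 : Matrix (B × C) (B × C) ℂ) :
    trBmid (jordan (embAB J1) ((1 : Matrix A A ℂ) ⊗ₖ J2)) = qcomp J1 J2 := by
  ext ⟨i, m⟩ ⟨j, n⟩
  simp only [jordan, trBmid, qcomp, Matrix.of_apply, Matrix.smul_apply, Matrix.add_apply,
    mulE1, mulE2, Finset.sum_add_distrib, smul_eq_mul]
  have h2 : (∑ k, ∑ l', J2 (k, m) (l', n) * J1 (i, l') (j, k))
      = ∑ k, ∑ l, J1 (i, k) (j, l) * J2 (l, m) (k, n) := by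
    rw [Finset.sum_comm]
    exact Finset.sum_congr rfl fun k _ => Finset.sum_congr rfl fun l _ => mul_comm _ _
  rw [← Finset.mul_sum, Finset.sum_add_distrib, h2]
  ring

lemma trCend_core (J1 : Matrix (A × B) (A × B) ℂ) (J2 : Matrix (B × C) (B × C) ℂ)
    (h2 : trB J2 = 1) :
    trCend (jordan (embAB J1) ((1 : Matrix A A ℂ) ⊗ₖ J2)) = J1 := by
  have h2e : ∀ x y : B, (∑ m, J2 (x, m) (y, m)) = if x = y then 1 else 0 := by
    intro x y
    have := congrFun (congrFun h2 x) y
    simpa [trB, Matrix.one_apply] using this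
  ext ⟨i, k⟩ ⟨j, l⟩
  simp only [jordan, trCend, Matrix.of_apply, Matrix.smul_apply, Matrix.add_apply,
    mulE1, mulE2, Finset.sum_add_distrib, smul_eq_mul]
  have e1 : (∑ m, ∑ l', J1 (i, k) (j, l') * J2 (l', m) (l, m)) = J1 (i, k) (j, l) := by
    rw [Finset.sum_comm]
    simp only [← Finset.mul_sum, h2e, mul_ite, mul_one, mul_zero]
    simp
  have e2 : (∑ m, ∑ l', J2 (k, m) (l', m) * J1 (i, l') (j, l)) = J1 (i, k) (j, l) := by
    rw [Finset.sum_comm]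
    simp only [← Finset.sum_mul, h2e, ite_mul, one_mul, zero_mul]
    simp
  rw [← Finset.mul_sum, Finset.sum_add_distrib, e1, e2]
  ring

lemma sigma_apply {ρ : Matrix A A ℂ} {J1 : Matrix (A × B) (A × B) ℂ} {σ : Matrix B B ℂ}
    (hσ : trA ((ρ ⊗ₖ (1 : Matrix B B ℂ)) * J1) = σ) (k l : B) :
    σ k l = ∑ i, ∑ j, ρ i j * J1 (j, k) (i, l) := by
  rw [← hσ]
  simp only [trA, Matrix.of_apply, Matrix.mul_apply, Matrix.kroneckerMap_apply,
    Matrix.one_apply, Fintype.sum_prod_type, Prod.mk.injEq, ite_and, mul_ite, mul_one, mul_zero,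
    ite_mul, zero_mul, one_mul, Finset.sum_ite_eq, Finset.sum_ite_eq', Finset.mem_univ, if_true]
  try simp only [sum_sum_ite_eq, sum3_ite_eq, sum_sum_ite_eq', sum3_ite_eq', mul_ite, mul_one, mul_zero, ite_mul, zero_mul, one_mul, Finset.sum_ite_eq, Finset.sum_ite_eq', Finset.mem_univ, if_true]

section Plemmas
variable {ρ : Matrix A A ℂ} {J1 : Matrix (A × B) (A × B) ℂ} {σ : Matrix B B ℂ}
  (J2 : Matrix (B × C) (B × C) ℂ)

lemma trA3_P1 (hσ : trA ((ρ ⊗ₖ (1 : Matrix B B ℂ)) * J1) = σ) :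
    trA3 ((ρ ⊗ₖ (1 : Matrix (B × C) (B × C) ℂ)) * (embAB J1 * ((1 : Matrix A A ℂ) ⊗ₖ J2)))
      = (σ ⊗ₖ (1 : Matrix C C ℂ)) * J2 := by
  ext ⟨k, m⟩ ⟨l, n⟩
  simp only [trA3, Matrix.of_apply, mulRhoL, mulE1]
  rw [show ((σ ⊗ₖ (1 : Matrix C C ℂ)) * J2) ((k, m)) ((l, n))
      = ∑ l', σ k l' * J2 (l', m) (l, n) from by
    simp only [Matrix.mul_apply, Matrix.kroneckerMap_apply, Matrix.one_apply,
      Fintype.sum_prod_type, mul_ite, mul_one, mul_zero, ite_mul, zero_mul,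
      Finset.sum_ite_eq, Finset.sum_ite_eq', Finset.mem_univ, if_true]
    try simp only [sum_sum_ite_eq, sum3_ite_eq, sum_sum_ite_eq', sum3_ite_eq']]
  simp only [sigma_apply hσ, Finset.sum_mul, Finset.mul_sum]
  conv_lhs => rw [sum_rot3]
  refine Finset.sum_congr rfl fun i _ => ?_
  refine Finset.sum_congr rfl fun i' _ => ?_
  refine Finset.sum_congr rfl fun l' _ => ?_
  ring

lemma trA3_P2 (hσ : trA ((ρ ⊗ₖ (1 : Matrix B B ℂ)) * J1) = σ) :
    trA3 ((ρ ⊗ₖ (1 : Matrix (B × C) (B × C) ℂ)) * (((1 : Matrix A A ℂ) ⊗ₖ J2) * embAB J1))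
      = J2 * (σ ⊗ₖ (1 : Matrix C C ℂ)) := by
  ext ⟨k, m⟩ ⟨l, n⟩
  simp only [trA3, Matrix.of_apply, mulRhoL, mulE2]
  rw [show (J2 * (σ ⊗ₖ (1 : Matrix C C ℂ))) ((k, m)) ((l, n))
      = ∑ l', J2 (k, m) (l', n) * σ l' l from by
    simp only [Matrix.mul_apply, Matrix.kroneckerMap_apply, Matrix.one_apply,
      Fintype.sum_prod_type, mul_ite, mul_one, mul_zero, ite_mul, zero_mul,
      Finset.sum_ite_eq, Finset.sum_ite_eq', Finset.mem_univ, if_true]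
    try simp only [sum_sum_ite_eq, sum3_ite_eq, sum_sum_ite_eq', sum3_ite_eq']]
  simp only [sigma_apply hσ, Finset.sum_mul, Finset.mul_sum]
  conv_lhs => rw [sum_rot3]
  refine Finset.sum_congr rfl fun i _ => ?_
  refine Finset.sum_congr rfl fun i' _ => ?_
  refine Finset.sum_congr rfl fun l' _ => ?_
  ring

lemma trA3_P3 (hσ : trA ((ρ ⊗ₖ (1 : Matrix B B ℂ)) * J1) = σ) :
    trA3 ((embAB J1 * ((1 : Matrix A A ℂ) ⊗ₖ J2)) * (ρ ⊗ₖ (1 : Matrix (B × C) (B × C) ℂ)))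
      = (σ ⊗ₖ (1 : Matrix C C ℂ)) * J2 := by
  ext ⟨k, m⟩ ⟨l, n⟩
  simp only [trA3, Matrix.of_apply, mulRhoR, mulE1]
  rw [show ((σ ⊗ₖ (1 : Matrix C C ℂ)) * J2) ((k, m)) ((l, n))
      = ∑ l', σ k l' * J2 (l', m) (l, n) from by
    simp only [Matrix.mul_apply, Matrix.kroneckerMap_apply, Matrix.one_apply,
      Fintype.sum_prod_type, mul_ite, mul_one, mul_zero, ite_mul, zero_mul,
      Finset.sum_ite_eq, Finset.sum_ite_eq', Finset.mem_univ, if_true]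
    try simp only [sum_sum_ite_eq, sum3_ite_eq, sum_sum_ite_eq', sum3_ite_eq']]
  simp only [sigma_apply hσ, Finset.sum_mul, Finset.mul_sum]
  conv_lhs => rw [sum_rot3]
  refine Finset.sum_congr rfl fun i _ => ?_
  rw [Finset.sum_comm]
  refine Finset.sum_congr rfl fun i' _ => ?_
  refine Finset.sum_congr rfl fun l' _ => ?_
  ring

lemma trA3_P4 (hσ : trA ((ρ ⊗ₖ (1 : Matrix B B ℂ)) * J1) = σ) :
    trA3 ((((1 : Matrix A A ℂ) ⊗ₖ J2) * embAB J1) * (ρ ⊗ₖ (1 : Matrix (B × C) (B × C) ℂ)))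
      = J2 * (σ ⊗ₖ (1 : Matrix C C ℂ)) := by
  ext ⟨k, m⟩ ⟨l, n⟩
  simp only [trA3, Matrix.of_apply, mulRhoR, mulE2]
  rw [show (J2 * (σ ⊗ₖ (1 : Matrix C C ℂ))) ((k, m)) ((l, n))
      = ∑ l', J2 (k, m) (l', n) * σ l' l from by
    simp only [Matrix.mul_apply, Matrix.kroneckerMap_apply, Matrix.one_apply,
      Fintype.sum_prod_type, mul_ite, mul_one, mul_zero, ite_mul, zero_mul,
      Finset.sum_ite_eq, Finset.sum_ite_eq', Finset.mem_univ, if_true]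
    try simp only [sum_sum_ite_eq, sum3_ite_eq, sum_sum_ite_eq', sum3_ite_eq']]
  simp only [sigma_apply hσ, Finset.sum_mul, Finset.mul_sum]
  conv_lhs => rw [sum_rot3]
  refine Finset.sum_congr rfl fun i _ => ?_
  rw [Finset.sum_comm]
  refine Finset.sum_congr rfl fun i' _ => ?_
  refine Finset.sum_congr rfl fun l' _ => ?_
  ring

lemma trA3_Q (hσ : trA ((ρ ⊗ₖ (1 : Matrix B B ℂ)) * J1) = σ) :
    trA3 (jordan (ρ ⊗ₖ (1 : Matrix (B × C) (B × C) ℂ))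
        (jordan (embAB J1) ((1 : Matrix A A ℂ) ⊗ₖ J2)))
      = jordan (σ ⊗ₖ (1 : Matrix C C ℂ)) J2 := by
  unfold jordan
  simp only [smul_add, mul_add, add_mul, mul_smul_comm, smul_mul_assoc]
  simp only [trA3_smul, trA3_add]
  rw [trA3_P1 J2 hσ, trA3_P2 J2 hσ, trA3_P3 J2 hσ, trA3_P4 J2 hσ]
  module

end Plemmas

lemma sum_swap4 {α β γ δ M : Type*} [Fintype α] [Fintype β] [Fintype γ] [Fintype δ]
    [AddCommMonoid M] (f : α → β → γ → δ → M) :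
    ∑ x : α, ∑ y : β, ∑ z : γ, ∑ w : δ, f x y z w
      = ∑ z : γ, ∑ w : δ, ∑ x : α, ∑ y : β, f x y z w := by
  trans ∑ z : γ, ∑ x : α, ∑ y : β, ∑ w : δ, f x y z w
  · exact sum_rot3 (fun x y z => ∑ w, f x y z w)
  · exact Finset.sum_congr rfl fun z _ => sum_rot3 (fun x y w => f x y z w)

lemma trB_apply_one {D E : Type*} [Fintype D] [Fintype E] [DecidableEq D]
    {J : Matrix (D × E) (D × E) ℂ} (h : trB J = 1) (x y : D) :
    (∑ m, J (x, m) (y, m)) = if x = y then 1 else 0 := by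
  have := congrFun (congrFun h x) y
  simpa [trB, Matrix.one_apply] using this

lemma trB_qcomp {J1 : Matrix (A × B) (A × B) ℂ} {J2 : Matrix (B × C) (B × C) ℂ}
    (h1 : trB J1 = 1) (h2 : trB J2 = 1) : trB (qcomp J1 J2) = 1 := by
  ext i j
  simp only [trB, qcomp, Matrix.of_apply, Matrix.one_apply]
  rw [← sum_rot3 (fun k l m => J1 (i, k) (j, l) * J2 (l, m) (k, m))]
  simp only [← Finset.mul_sum, trB_apply_one h2, mul_ite, mul_one, mul_zero]
  simp only [Finset.sum_ite_eq, Finset.sum_ite_eq', Finset.mem_univ, if_true]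
  exact trB_apply_one h1 i j

lemma psd_exists_conjTranspose_mul_self {n : Type*} [Fintype n] {P : Matrix n n ℂ}
    (hP : P.PosSemidef) : ∃ V : Matrix n n ℂ, P = Vᴴ * V := by
  classical
  open scoped MatrixOrder in
  obtain ⟨a, ha⟩ := CStarAlgebra.nonneg_iff_eq_star_mul_self.mp hP.nonneg
  exact ⟨a, ha⟩

lemma ptA_qcomp_psd {J1 : Matrix (A × B) (A × B) ℂ} {J2 : Matrix (B × C) (B × C) ℂ}
    (h1 : (ptA J1).PosSemidef) (h2 : (ptA J2).PosSemidef) :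
    (ptA (qcomp J1 J2)).PosSemidef := by
  obtain ⟨V, hV⟩ := psd_exists_conjTranspose_mul_self h1
  obtain ⟨W, hW⟩ := psd_exists_conjTranspose_mul_self h2
  have hP1 : ∀ (i : A) (k : B) (j : A) (l : B),
      J1 (j, k) (i, l) = ∑ t, star (V t (i, k)) * V t (j, l) := by
    intro i k j l
    have := congrFun (congrFun hV (i, k)) (j, l)
    simpa [ptA, Matrix.mul_apply, Matrix.conjTranspose_apply] using this
  have hP2 : ∀ (k : B) (m : C) (l : B) (n : C),
      J2 (l, m) (k, n) = ∑ s, star (W s (k, m)) * W s (l, n) := by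
    intro k m l n
    have := congrFun (congrFun hW (k, m)) (l, n)
    simpa [ptA, Matrix.mul_apply, Matrix.conjTranspose_apply] using this
  have key : ptA (qcomp J1 J2) =
      (Matrix.of fun (p : (A × B) × (B × C)) (q : A × C) =>
        ∑ l, V p.1 (q.1, l) * W p.2 (l, q.2))ᴴ *
      (Matrix.of fun (p : (A × B) × (B × C)) (q : A × C) =>
        ∑ l, V p.1 (q.1, l) * W p.2 (l, q.2)) := by
    ext ⟨i, m⟩ ⟨j, n⟩
    simp only [ptA, qcomp, Matrix.of_apply, hP1, hP2]
    rw [Matrix.mul_apply, Fintype.sum_prod_type]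
    simp only [Matrix.conjTranspose_apply, Matrix.of_apply, star_sum, star_mul',
      Finset.sum_mul, Finset.mul_sum]
    rw [sum_swap4 (fun (k : B) (l : B) (s : B × C) (t : A × B) =>
      star (V t (i, k)) * V t (j, l) * (star (W s (k, m)) * W s (l, n)))]
    rw [Finset.sum_comm]
    refine Finset.sum_congr rfl fun t _ => ?_
    refine Finset.sum_congr rfl fun s _ => ?_
    rw [Finset.sum_comm]
    refine Finset.sum_congr rfl fun l _ => ?_
    refine Finset.sum_congr rfl fun k _ => ?_
    ring
  rw [key]
  exact Matrix.posSemidef_conjTranspose_mul_self _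

lemma trA_rho_qcomp {ρ : Matrix A A ℂ} {σ : Matrix B B ℂ} {τ : Matrix C C ℂ}
    {J1 : Matrix (A × B) (A × B) ℂ} {J2 : Matrix (B × C) (B × C) ℂ}
    (hσ : trA ((ρ ⊗ₖ (1 : Matrix B B ℂ)) * J1) = σ)
    (hτ : trA ((σ ⊗ₖ (1 : Matrix C C ℂ)) * J2) = τ) :
    trA ((ρ ⊗ₖ (1 : Matrix C C ℂ)) * qcomp J1 J2) = τ := by
  ext m n
  rw [show τ m n = ∑ k, ∑ l, σ k l * J2 (l, m) (k, n) from sigma_apply hτ m n]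
  simp only [sigma_apply hσ]
  simp only [trA, Matrix.of_apply, Matrix.mul_apply, Matrix.kroneckerMap_apply,
    Matrix.one_apply, qcomp, Fintype.sum_prod_type, Prod.mk.injEq, ite_and, mul_ite, mul_one,
    mul_zero, ite_mul, zero_mul, one_mul, Finset.sum_ite_eq, Finset.sum_ite_eq',
    Finset.mem_univ, if_true]
  try simp only [sum_sum_ite_eq, sum3_ite_eq, sum_sum_ite_eq', sum3_ite_eq', mul_ite, mul_one, mul_zero, ite_mul, zero_mul, one_mul, Finset.sum_ite_eq, Finset.sum_ite_eq', Finset.mem_univ, if_true]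
  simp only [Finset.sum_mul, Finset.mul_sum]
  rw [sum_swap4]
  refine Finset.sum_congr rfl fun x1 _ => ?_
  refine Finset.sum_congr rfl fun x2 _ => ?_
  refine Finset.sum_congr rfl fun x3 _ => ?_
  refine Finset.sum_congr rfl fun x4 _ => ?_
  ring

lemma psd_entry_abs_le_trace {n : Type*} [Fintype n] {P : Matrix n n ℂ}
    (hP : P.PosSemidef) (i j : n) : ‖P i j‖ ≤ P.trace.re := by
  classical
  obtain ⟨V, rfl⟩ := psd_exists_conjTranspose_mul_self hP
  have hent : ∀ a b, (Vᴴ * V) a b = ∑ s, star (V s a) * V s b := fun a b => by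
    simp [Matrix.mul_apply, Matrix.conjTranspose_apply]
  have htr : (Vᴴ * V).trace.re = ∑ t, ∑ s, ‖V s t‖ ^ 2 := by
    rw [Matrix.trace]
    rw [Complex.re_sum]
    refine Finset.sum_congr rfl fun t _ => ?_
    rw [Matrix.diag_apply, hent, Complex.re_sum]
    refine Finset.sum_congr rfl fun s _ => ?_
    rw [Complex.sq_norm, Complex.normSq_apply, Complex.star_def, Complex.mul_re,
      Complex.conj_re, Complex.conj_im]
    ring
  have habs : ‖(Vᴴ * V) i j‖ ≤ ∑ s, ‖V s i‖ * ‖V s j‖ := by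
    rw [hent]
    refine (norm_sum_le _ _).trans ?_
    refine le_of_eq (Finset.sum_congr rfl fun s _ => ?_)
    rw [norm_mul, Complex.star_def, Complex.norm_conj]
  have hsum : ∀ a : n, (∑ s, ‖V s a‖ ^ 2) ≤ (Vᴴ * V).trace.re := by
    intro a
    rw [htr]
    refine Finset.single_le_sum (f := fun t => ∑ s, ‖V s t‖ ^ 2) ?_ (Finset.mem_univ a)
    intro t _
    exact Finset.sum_nonneg fun s _ => sq_nonneg _
  refine habs.trans ?_
  have step : (∑ s, ‖V s i‖ * ‖V s j‖)
      ≤ ((∑ s, ‖V s i‖ ^ 2) + (∑ s, ‖V s j‖ ^ 2)) / 2 := by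
    rw [← Finset.sum_add_distrib, Finset.sum_div]
    refine Finset.sum_le_sum fun s _ => ?_
    nlinarith [sq_nonneg (‖V s i‖ - ‖V s j‖)]
  refine step.trans ?_
  have h1 := hsum i
  have h2 := hsum j
  linarith

lemma state_entry_bound {ρ : Matrix A A ℂ} (hρ : IsState ρ) (i j : A) :
    ‖ρ i j‖ ≤ 1 := by
  have h := psd_entry_abs_le_trace hρ.1 i j
  rw [hρ.2] at h
  simpa using h

lemma trace_ptA (J : Matrix (A × B) (A × B) ℂ) : (ptA J).trace = J.trace := by
  simp [Matrix.trace, Matrix.diag, ptA]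

lemma jam_trace (J : Matrix (A × B) (A × B) ℂ) (hJ : IsJam J) :
    J.trace = (Fintype.card A : ℂ) := by
  have : J.trace = (trB J).trace := by
    simp [Matrix.trace, Matrix.diag, trB, Fintype.sum_prod_type]
  rw [this, hJ.2, Matrix.trace_one]

lemma jam_entry_bound {J : Matrix (A × B) (A × B) ℂ} (hJ : IsJam J) (p q : A × B) :
    ‖J p q‖ ≤ (Fintype.card A : ℝ) := by
  have h := psd_entry_abs_le_trace hJ.1 (q.1, p.2) (p.1, q.2)
  rw [trace_ptA, jam_trace J hJ] at h
  simpa [ptA] using h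

lemma kron_rho_entry_bound {ρ : Matrix A A ℂ} (hρ : IsState ρ) (q r : A × B) :
    ‖(ρ ⊗ₖ (1 : Matrix B B ℂ)) q r‖ ≤ 1 := by
  rw [Matrix.kroneckerMap_apply]
  by_cases h : q.2 = r.2
  · simp only [Matrix.one_apply, h, if_true, mul_one]
    exact state_entry_bound hρ _ _
  · simp [Matrix.one_apply, h]

lemma jordan_entry_bound {ρ : Matrix A A ℂ} {J : Matrix (A × B) (A × B) ℂ}
    (hρ : IsState ρ) (hJ : IsJam J) (q p : A × B) :
    ‖(jordan (ρ ⊗ₖ (1 : Matrix B B ℂ)) J) q p‖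
      ≤ (Fintype.card (A × B) : ℝ) * (Fintype.card A : ℝ) := by
  have hXY : ∀ r : A × B, ‖(ρ ⊗ₖ (1 : Matrix B B ℂ)) q r * J r p‖
      ≤ (Fintype.card A : ℝ) := by
    intro r
    rw [norm_mul]
    calc ‖(ρ ⊗ₖ (1 : Matrix B B ℂ)) q r‖ * ‖J r p‖
        ≤ 1 * (Fintype.card A : ℝ) :=
          mul_le_mul (kron_rho_entry_bound hρ q r) (jam_entry_bound hJ r p)
            (norm_nonneg _) zero_le_one
      _ = (Fintype.card A : ℝ) := one_mul _
  have hYX : ∀ r : A × B, ‖J q r * (ρ ⊗ₖ (1 : Matrix B B ℂ)) r p‖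
      ≤ (Fintype.card A : ℝ) := by
    intro r
    rw [norm_mul]
    calc ‖J q r‖ * ‖(ρ ⊗ₖ (1 : Matrix B B ℂ)) r p‖
        ≤ (Fintype.card A : ℝ) * 1 :=
          mul_le_mul (jam_entry_bound hJ q r) (kron_rho_entry_bound hρ r p)
            (norm_nonneg _) (Nat.cast_nonneg _)
      _ = (Fintype.card A : ℝ) := mul_one _
  have e1 : ‖((ρ ⊗ₖ (1 : Matrix B B ℂ)) * J) q p‖
      ≤ (Fintype.card (A × B) : ℝ) * (Fintype.card A : ℝ) := by
    rw [Matrix.mul_apply]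
    refine (norm_sum_le _ _).trans ?_
    calc (∑ r, ‖(ρ ⊗ₖ (1 : Matrix B B ℂ)) q r * J r p‖)
        ≤ ∑ _r : A × B, (Fintype.card A : ℝ) := Finset.sum_le_sum fun r _ => hXY r
      _ = (Fintype.card (A × B) : ℝ) * (Fintype.card A : ℝ) := by
          simp [Finset.sum_const, Finset.card_univ, nsmul_eq_mul]
  have e2 : ‖(J * (ρ ⊗ₖ (1 : Matrix B B ℂ))) q p‖
      ≤ (Fintype.card (A × B) : ℝ) * (Fintype.card A : ℝ) := by
    rw [Matrix.mul_apply]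
    refine (norm_sum_le _ _).trans ?_
    calc (∑ r, ‖J q r * (ρ ⊗ₖ (1 : Matrix B B ℂ)) r p‖)
        ≤ ∑ _r : A × B, (Fintype.card A : ℝ) := Finset.sum_le_sum fun r _ => hYX r
      _ = (Fintype.card (A × B) : ℝ) * (Fintype.card A : ℝ) := by
          simp [Finset.sum_const, Finset.card_univ, nsmul_eq_mul]
  have hj : (jordan (ρ ⊗ₖ (1 : Matrix B B ℂ)) J) q p
      = (2 : ℂ)⁻¹ * (((ρ ⊗ₖ (1 : Matrix B B ℂ)) * J) q p
        + (J * (ρ ⊗ₖ (1 : Matrix B B ℂ))) q p) := by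
    simp [jordan]
  rw [hj, norm_mul]
  have : ‖(2 : ℂ)⁻¹‖ = 2⁻¹ := by
    rw [norm_inv]; norm_num
  rw [this]
  calc (2⁻¹ : ℝ) * ‖((ρ ⊗ₖ (1 : Matrix B B ℂ)) * J) q p
        + (J * (ρ ⊗ₖ (1 : Matrix B B ℂ))) q p‖
      ≤ 2⁻¹ * (‖((ρ ⊗ₖ (1 : Matrix B B ℂ)) * J) q p‖
        + ‖(J * (ρ ⊗ₖ (1 : Matrix B B ℂ))) q p‖) := by
        have := norm_add_le (((ρ ⊗ₖ (1 : Matrix B B ℂ)) * J) q p)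
          ((J * (ρ ⊗ₖ (1 : Matrix B B ℂ))) q p)
        nlinarith [this]
    _ ≤ 2⁻¹ * ((Fintype.card (A × B) : ℝ) * (Fintype.card A : ℝ)
        + (Fintype.card (A × B) : ℝ) * (Fintype.card A : ℝ)) := by
        have := e1; have := e2; nlinarith
    _ = (Fintype.card (A × B) : ℝ) * (Fintype.card A : ℝ) := by ring

lemma cost_set_bddBelow (K : Matrix (A × B) (A × B) ℂ) {ρ : Matrix A A ℂ}
    (hρ : IsState ρ) (σ : Matrix B B ℂ) :
    BddBelow { r : ℝ | ∃ J : Matrix (A × B) (A × B) ℂ, IsJam J ∧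
      trA ((ρ ⊗ₖ (1 : Matrix B B ℂ)) * J) = σ ∧
      r = (Matrix.trace (K * jordan (ρ ⊗ₖ (1 : Matrix B B ℂ)) J)).re } := by
  set Cb : ℝ := (Fintype.card (A × B) : ℝ) * (Fintype.card A : ℝ) with hCb
  refine ⟨-((∑ p, ∑ q, ‖K p q‖) * Cb), ?_⟩
  rintro r ⟨J, hJ, -, rfl⟩
  set M := jordan (ρ ⊗ₖ (1 : Matrix B B ℂ)) J with hM
  have habs : ‖(K * M).trace‖ ≤ (∑ p, ∑ q, ‖K p q‖) * Cb := by
    rw [trace_mul_pair]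
    refine (norm_sum_le _ _).trans ?_
    calc (∑ p, ‖∑ q, K p q * M q p‖)
        ≤ ∑ p, ∑ q, ‖K p q * M q p‖ :=
          Finset.sum_le_sum fun p _ => norm_sum_le _ _
      _ ≤ ∑ p, ∑ q, ‖K p q‖ * Cb := by
          refine Finset.sum_le_sum fun p _ => Finset.sum_le_sum fun q _ => ?_
          rw [norm_mul]
          exact mul_le_mul_of_nonneg_left (jordan_entry_bound hρ hJ q p)
            (norm_nonneg _)
      _ = (∑ p, ∑ q, ‖K p q‖) * Cb := by
          simp only [← Finset.sum_mul]
  have hre := (abs_le.mp (Complex.abs_re_le_norm ((K * M).trace))).1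
  linarith

lemma isJam_one_kron {σ : Matrix B B ℂ} (hσ : IsState σ) :
    IsJam ((1 : Matrix A A ℂ) ⊗ₖ σ) := by
  constructor
  · have hpt : ptA ((1 : Matrix A A ℂ) ⊗ₖ σ) = (1 : Matrix A A ℂ) ⊗ₖ σ := by
      ext ⟨i, k⟩ ⟨j, l⟩
      simp [ptA, Matrix.one_apply, eq_comm]
    rw [hpt]
    obtain ⟨Bm, hBm⟩ := psd_exists_conjTranspose_mul_self hσ.1
    have hct : ((1 : Matrix A A ℂ) ⊗ₖ Bm)ᴴ = (1 : Matrix A A ℂ) ⊗ₖ Bmᴴ := by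
      ext ⟨i, k⟩ ⟨j, l⟩
      by_cases h : i = j
      · subst h
        simp [Matrix.conjTranspose_apply, Matrix.one_apply]
      · simp [Matrix.conjTranspose_apply, Matrix.one_apply, h, Ne.symm h]
    have : (1 : Matrix A A ℂ) ⊗ₖ σ
        = ((1 : Matrix A A ℂ) ⊗ₖ Bm)ᴴ * ((1 : Matrix A A ℂ) ⊗ₖ Bm) := by
      rw [hct, ← Matrix.mul_kronecker_mul, Matrix.one_mul, ← hBm]
    rw [this]
    exact Matrix.posSemidef_conjTranspose_mul_self _
  · ext i j
    have htr : (∑ k, σ k k) = 1 := hσ.2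
    simp only [trB, Matrix.of_apply, Matrix.kroneckerMap_apply, Matrix.one_apply, ite_mul,
      one_mul, zero_mul]
    by_cases h : i = j <;> simp [h, htr]

lemma trA_one_kron {ρ : Matrix A A ℂ} (σ : Matrix B B ℂ) (hρ : IsState ρ) :
    trA ((ρ ⊗ₖ (1 : Matrix B B ℂ)) * ((1 : Matrix A A ℂ) ⊗ₖ σ)) = σ := by
  rw [← Matrix.mul_kronecker_mul, Matrix.mul_one, Matrix.one_mul]
  ext k l
  have htr : (∑ i, ρ i i) = 1 := hρ.2
  simp only [trA, Matrix.of_apply, Matrix.kroneckerMap_apply, ← Finset.sum_mul, htr, one_mul]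

lemma cost_set_nonempty (K : Matrix (A × B) (A × B) ℂ) {ρ : Matrix A A ℂ} {σ : Matrix B B ℂ}
    (hρ : IsState ρ) (hσ : IsState σ) :
    { r : ℝ | ∃ J : Matrix (A × B) (A × B) ℂ, IsJam J ∧
      trA ((ρ ⊗ₖ (1 : Matrix B B ℂ)) * J) = σ ∧
      r = (Matrix.trace (K * jordan (ρ ⊗ₖ (1 : Matrix B B ℂ)) J)).re }.Nonempty :=
  ⟨_, ⟨(1 : Matrix A A ℂ) ⊗ₖ σ, isJam_one_kron hσ, trA_one_kron σ hρ, rfl⟩⟩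

end QOTAux


section Main
variable {A B C : Type*} [Fintype A] [Fintype B] [Fintype C]
  [DecidableEq A] [DecidableEq B] [DecidableEq C]

lemma key_ineq (K_AB : Matrix (A × B) (A × B) ℂ) (K_BC : Matrix (B × C) (B × C) ℂ)
    (K_AC : Matrix (A × C) (A × C) ℂ)
    {ρ : Matrix A A ℂ} {σ : Matrix B B ℂ} {τ : Matrix C C ℂ}
    {J1 : Matrix (A × B) (A × B) ℂ} {J2 : Matrix (B × C) (B × C) ℂ}
    (hρ : IsState ρ) (hJ1 : IsJam J1) (hσ1 : trA ((ρ ⊗ₖ (1 : Matrix B B ℂ)) * J1) = σ)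
    (hJ2 : IsJam J2) (hτ1 : trA ((σ ⊗ₖ (1 : Matrix C C ℂ)) * J2) = τ)
    (h0 : 0 ≤ (Matrix.trace
      ((embAB (C := C) K_AB + (1 : Matrix A A ℂ) ⊗ₖ K_BC - embAC (B := B) K_AC) *
        jordan (ρ ⊗ₖ (1 : Matrix (B × C) (B × C) ℂ))
          (jordan (embAB J1) ((1 : Matrix A A ℂ) ⊗ₖ J2)))).re) :
    (Matrix.trace (K_AC * jordan (ρ ⊗ₖ (1 : Matrix C C ℂ)) (qcomp J1 J2))).re
      ≤ (Matrix.trace (K_AB * jordan (ρ ⊗ₖ (1 : Matrix B B ℂ)) J1)).re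
        + (Matrix.trace (K_BC * jordan (σ ⊗ₖ (1 : Matrix C C ℂ)) J2)).re := by
  set Q := jordan (ρ ⊗ₖ (1 : Matrix (B × C) (B × C) ℂ))
    (jordan (embAB J1) ((1 : Matrix A A ℂ) ⊗ₖ J2)) with hQ
  have hsplit : ((embAB (C := C) K_AB + (1 : Matrix A A ℂ) ⊗ₖ K_BC - embAC (B := B) K_AC)
      * Q).trace
      = (embAB (C := C) K_AB * Q).trace + (((1 : Matrix A A ℂ) ⊗ₖ K_BC) * Q).trace
        - (embAC (B := B) K_AC * Q).trace := by
    rw [Matrix.sub_mul, Matrix.add_mul, Matrix.trace_sub, Matrix.trace_add]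
  have hAB : (embAB (C := C) K_AB * Q).trace
      = (K_AB * jordan (ρ ⊗ₖ (1 : Matrix B B ℂ)) J1).trace := by
    rw [trace_embAB_mul, hQ, trCend_jordan, trCend_core J1 J2 hJ2.2]
  have hBC : (((1 : Matrix A A ℂ) ⊗ₖ K_BC) * Q).trace
      = (K_BC * jordan (σ ⊗ₖ (1 : Matrix C C ℂ)) J2).trace := by
    rw [trace_oneKron_mul, hQ, trA3_Q J2 hσ1]
  have hAC : (embAC (B := B) K_AC * Q).trace
      = (K_AC * jordan (ρ ⊗ₖ (1 : Matrix C C ℂ)) (qcomp J1 J2)).trace := by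
    rw [trace_embAC_mul, hQ, trBmid_jordan, trBmid_core]
  rw [hsplit, hAB, hBC, hAC] at h0
  rw [Complex.sub_re, Complex.add_re] at h0
  linarith

end Main

theorem stmt11 {A B C : Type*} [Fintype A] [Fintype B] [Fintype C]
    [Nonempty A] [Nonempty B] [Nonempty C]
    [DecidableEq A] [DecidableEq B] [DecidableEq C]
    (K_AB : Matrix (A × B) (A × B) ℂ) (hKAB : K_AB.IsHermitian)
    (K_BC : Matrix (B × C) (B × C) ℂ) (hKBC : K_BC.IsHermitian)
    (K_AC : Matrix (A × C) (A × C) ℂ) (hKAC : K_AC.IsHermitian)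
    (hpos : ∀ (ρ : Matrix A A ℂ) (J_AB : Matrix (A × B) (A × B) ℂ)
        (J_BC : Matrix (B × C) (B × C) ℂ),
        IsState ρ → IsJam J_AB → IsJam J_BC →
        0 ≤ (Matrix.trace
          ((embAB (C := C) K_AB + (1 : Matrix A A ℂ) ⊗ₖ K_BC - embAC (B := B) K_AC) *
            jordan (ρ ⊗ₖ (1 : Matrix (B × C) (B × C) ℂ))
              (jordan (embAB J_AB) ((1 : Matrix A A ℂ) ⊗ₖ J_BC)))).re) :
    ∀ (ρ : Matrix A A ℂ) (σ : Matrix B B ℂ) (τ : Matrix C C ℂ),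
      IsState ρ → IsState σ → IsState τ →
      cost K_AC ρ τ ≤ cost K_AB ρ σ + cost K_BC σ τ := by
  intro ρ σ τ hρ hσ hτ
  set SAB : Set ℝ := { r : ℝ | ∃ J : Matrix (A × B) (A × B) ℂ, IsJam J ∧
      trA ((ρ ⊗ₖ (1 : Matrix B B ℂ)) * J) = σ ∧
      r = (Matrix.trace (K_AB * jordan (ρ ⊗ₖ (1 : Matrix B B ℂ)) J)).re } with hSAB
  set SBC : Set ℝ := { r : ℝ | ∃ J : Matrix (B × C) (B × C) ℂ, IsJam J ∧
      trA ((σ ⊗ₖ (1 : Matrix C C ℂ)) * J) = τ ∧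
      r = (Matrix.trace (K_BC * jordan (σ ⊗ₖ (1 : Matrix C C ℂ)) J)).re } with hSBC
  set SAC : Set ℝ := { r : ℝ | ∃ J : Matrix (A × C) (A × C) ℂ, IsJam J ∧
      trA ((ρ ⊗ₖ (1 : Matrix C C ℂ)) * J) = τ ∧
      r = (Matrix.trace (K_AC * jordan (ρ ⊗ₖ (1 : Matrix C C ℂ)) J)).re } with hSAC
  have hcAB : cost K_AB ρ σ = sInf SAB := rfl
  have hcBC : cost K_BC σ τ = sInf SBC := rfl
  have hcAC : cost K_AC ρ τ = sInf SAC := rfl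
  have hbddAC : BddBelow SAC := cost_set_bddBelow K_AC hρ τ
  have hneAB : SAB.Nonempty := cost_set_nonempty K_AB hρ hσ
  have hneBC : SBC.Nonempty := cost_set_nonempty K_BC hσ hτ
  have hkey : ∀ a ∈ SAB, ∀ b ∈ SBC, cost K_AC ρ τ ≤ a + b := by
    rintro a ⟨J1, hJ1, hs1, rfl⟩ b ⟨J2, hJ2, hs2, rfl⟩
    have hmem : (Matrix.trace (K_AC * jordan (ρ ⊗ₖ (1 : Matrix C C ℂ))
        (qcomp J1 J2))).re ∈ SAC :=
      ⟨qcomp J1 J2, ⟨ptA_qcomp_psd hJ1.1 hJ2.1, trB_qcomp hJ1.2 hJ2.2⟩,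
        trA_rho_qcomp hs1 hs2, rfl⟩
    have h1 : cost K_AC ρ τ ≤ (Matrix.trace (K_AC * jordan (ρ ⊗ₖ (1 : Matrix C C ℂ))
        (qcomp J1 J2))).re := by
      rw [hcAC]
      exact csInf_le hbddAC hmem
    exact h1.trans (key_ineq K_AB K_BC K_AC hρ hJ1 hs1 hJ2 hs2
      (hpos ρ J1 J2 hρ hJ1 hJ2))
  have h2 : ∀ b ∈ SBC, cost K_AC ρ τ - b ≤ cost K_AB ρ σ := by
    intro b hb
    rw [hcAB]
    refine le_csInf hneAB fun a ha => ?_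
    have := hkey a ha b hb
    linarith
  have h3 : cost K_AC ρ τ - cost K_AB ρ σ ≤ cost K_BC σ τ := by
    rw [hcBC]
    refine le_csInf hneBC fun b hb => ?_
    have := h2 b hb
    linarith
  linarith
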